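/- Termination of the KE-tableau expansion loop: the process that repeatedly selects an open branch with a non-fulfilled disjunction and applies either the E-rule (decreasing the number of non-fulfilled disjunctions on that branch) or the PB-rule (on one child the disjunction becomes fulfilled, on the other the set of complements of its disjuncts present on the branch strictly grows) terminates after finitely many steps. -/

import Mathlib

/-- A disjunction c on the branch ϑ is fulfilled if some of its disjuncts occurs
(as a singleton literal clause) on ϑ. -/
def FulfilledOn {L : Type*} [DecidableEq L] (ϑ : Finset (List L)) (c : List L) : Prop :=
  ∃ l ∈ c, ([l] : List L) ∈ ϑ

/-- A branch is closed if it contains a complementary pair of literals. -/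
def ClosedB {L : Type*} [DecidableEq L] (compl : L → L) (ϑ : Finset (List L)) : Prop :=
  ∃ l : L, ([l] : List L) ∈ ϑ ∧ ([compl l] : List L) ∈ ϑ

/-- One step of the KE-tableau expansion loop: select an open branch ϑ with a
non-fulfilled disjunction c and apply either the E-rule (the complements of all
disjuncts but one occur on ϑ; add the remaining disjunct) or the PB-rule (split on a
disjunct whose complement is not yet on the branch). -/
def ExpStep {L : Type*} [DecidableEq L] (compl : L → L)
    (T T' : Finset (Finset (List L))) : Prop :=
  ∃ ϑ ∈ T, ¬ ClosedB compl ϑ ∧ ∃ c ∈ ϑ, ¬ FulfilledOn ϑ c ∧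
    ((∃ i : Fin c.length,
        (∀ j : Fin c.length, j ≠ i → ([compl (c.get j)] : List L) ∈ ϑ) ∧
        T' = insert (insert ([c.get i] : List L) ϑ) (T.erase ϑ)) ∨
     (∃ h : Fin c.length, ([compl (c.get h)] : List L) ∉ ϑ ∧
        T' = insert (insert ([c.get h] : List L) ϑ)
              (insert (insert ([compl (c.get h)] : List L) ϑ) (T.erase ϑ))))

open Classical in
/-- Weight of a clause on a branch: 0 if fulfilled, else 1 plus the number of
disjuncts whose complement is missing on the branch. -/
noncomputable def keW {L : Type*} [DecidableEq L] (compl : L → L)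
    (ϑ : Finset (List L)) (c : List L) : ℕ :=
  if FulfilledOn ϑ c then 0
  else 1 + (Finset.univ.filter
      (fun i : Fin c.length => ([compl (c.get i)] : List L) ∉ ϑ)).card

/-- Measure of a branch. -/
noncomputable def keMu {L : Type*} [DecidableEq L] (compl : L → L)
    (ϑ : Finset (List L)) : ℕ :=
  ∑ c ∈ ϑ, keW compl ϑ c

/-- Measure of a tableau. -/
noncomputable def keM {L : Type*} [DecidableEq L] (compl : L → L)
    (T : Finset (Finset (List L))) : ℕ :=
  ∑ ϑ ∈ T, 3 ^ keMu compl ϑ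

lemma fulfilled_mono {L : Type*} [DecidableEq L] {ϑ ϑ' : Finset (List L)} {c : List L}
    (h : ϑ ⊆ ϑ') (hf : FulfilledOn ϑ c) : FulfilledOn ϑ' c := by
  obtain ⟨l, hl, hm⟩ := hf
  exact ⟨l, hl, h hm⟩

lemma keW_mono {L : Type*} [DecidableEq L] (compl : L → L) {ϑ ϑ' : Finset (List L)}
    (h : ϑ ⊆ ϑ') (c : List L) : keW compl ϑ' c ≤ keW compl ϑ c := by
  classical
  unfold keW
  by_cases h1 : FulfilledOn ϑ c
  · simp [h1, fulfilled_mono h h1]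
  · by_cases h2 : FulfilledOn ϑ' c
    · simp [h1, h2]
    · simp only [h1, h2, if_neg, if_false]
      refine Nat.add_le_add_left (Finset.card_le_card ?_) 1
      intro i hi
      simp only [Finset.mem_filter, Finset.mem_univ, true_and] at hi ⊢
      exact fun hmem => hi (h hmem)

lemma keW_pos {L : Type*} [DecidableEq L] (compl : L → L) {ϑ : Finset (List L)}
    {c : List L} (h : ¬ FulfilledOn ϑ c) : 1 ≤ keW compl ϑ c := by
  unfold keW
  simp [h]

lemma keW_eq_zero {L : Type*} [DecidableEq L] (compl : L → L) {ϑ : Finset (List L)}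
    {c : List L} (h : FulfilledOn ϑ c) : keW compl ϑ c = 0 := by
  unfold keW; simp [h]

/-- Inserting a fulfilled singleton while strictly decreasing the weight of some
clause on the branch strictly decreases the branch measure. -/
lemma keMu_insert_lt {L : Type*} [DecidableEq L] (compl : L → L)
    {ϑ : Finset (List L)} {x : L} {c : List L} (hc : c ∈ ϑ)
    (hlt : keW compl (insert ([x] : List L) ϑ) c < keW compl ϑ c) :
    keMu compl (insert ([x] : List L) ϑ) < keMu compl ϑ := by
  classical
  set ϑ' := insert ([x] : List L) ϑ with hϑ'
  have hsub : ϑ ⊆ ϑ' := Finset.subset_insert _ _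
  have hx : keW compl ϑ' ([x] : List L) = 0 :=
    keW_eq_zero compl ⟨x, by simp, Finset.mem_insert_self _ _⟩
  have hsum : ∑ d ∈ ϑ, keW compl ϑ' d < ∑ d ∈ ϑ, keW compl ϑ d :=
    Finset.sum_lt_sum (fun d _ => keW_mono compl hsub d) ⟨c, hc, hlt⟩
  unfold keMu
  by_cases hmem : ([x] : List L) ∈ ϑ
  · have heq : ϑ' = ϑ := by rw [hϑ']; exact Finset.insert_eq_self.mpr hmem
    rw [heq] at hlt
    exact absurd hlt (lt_irrefl _)
  · rw [hϑ', Finset.sum_insert hmem, ← hϑ', hx, zero_add]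
    exact hsum

/-- Adding a disjunct of a non-fulfilled clause strictly decreases the measure. -/
lemma keMu_insert_disjunct_lt {L : Type*} [DecidableEq L] (compl : L → L)
    {ϑ : Finset (List L)} {c : List L} (hc : c ∈ ϑ) (hnf : ¬ FulfilledOn ϑ c)
    (i : Fin c.length) :
    keMu compl (insert ([c.get i] : List L) ϑ) < keMu compl ϑ := by
  refine keMu_insert_lt compl hc ?_
  have hf : FulfilledOn (insert ([c.get i] : List L) ϑ) c :=
    ⟨c.get i, List.get_mem c i, Finset.mem_insert_self _ _⟩
  rw [keW_eq_zero compl hf]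
  exact keW_pos compl hnf

/-- Adding the complement of a missing disjunct strictly decreases the measure. -/
lemma keMu_insert_compl_lt {L : Type*} [DecidableEq L] (compl : L → L)
    {ϑ : Finset (List L)} {c : List L} (hc : c ∈ ϑ) (hnf : ¬ FulfilledOn ϑ c)
    (h : Fin c.length) (hmiss : ([compl (c.get h)] : List L) ∉ ϑ) :
    keMu compl (insert ([compl (c.get h)] : List L) ϑ) < keMu compl ϑ := by
  classical
  refine keMu_insert_lt compl hc ?_
  set ϑ' := insert ([compl (c.get h)] : List L) ϑ with hϑ'
  by_cases hf : FulfilledOn ϑ' c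
  · rw [keW_eq_zero compl hf]
    exact keW_pos compl hnf
  · unfold keW
    simp only [hf, hnf, if_neg, if_false]
    refine Nat.add_lt_add_left (Finset.card_lt_card ?_) 1
    constructor
    · intro i hi
      simp only [Finset.mem_filter, Finset.mem_univ, true_and] at hi ⊢
      exact fun hmem => hi (Finset.subset_insert _ _ hmem)
    · intro hsub
      have hh : h ∈ Finset.univ.filter
          (fun i : Fin c.length => ([compl (c.get i)] : List L) ∉ ϑ) := by
        simp only [Finset.mem_filter, Finset.mem_univ, true_and]
        exact hmiss
      have := hsub hh
      simp only [Finset.mem_filter] at this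
      exact this.2 (Finset.mem_insert_self _ _)

lemma sum_insert_le_nat {α : Type*} [DecidableEq α] (s : Finset α) (a : α) (f : α → ℕ) :
    ∑ x ∈ insert a s, f x ≤ f a + ∑ x ∈ s, f x := by
  by_cases h : a ∈ s
  · rw [Finset.insert_eq_self.mpr h]; exact Nat.le_add_left _ _
  · rw [Finset.sum_insert h]

/-- One expansion step strictly decreases the tableau measure. -/
lemma keM_step_lt {L : Type*} [DecidableEq L] (compl : L → L)
    {T T' : Finset (Finset (List L))} (h : ExpStep compl T T') :
    keM compl T' < keM compl T := by
  classical
  obtain ⟨ϑ, hϑT, _, c, hc, hnf, hcase⟩ := h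
  have hT : keM compl T = 3 ^ keMu compl ϑ + ∑ θ ∈ T.erase ϑ, 3 ^ keMu compl θ :=
    (Finset.add_sum_erase _ _ hϑT).symm
  have hmu1 : 1 ≤ keMu compl ϑ :=
    le_trans (keW_pos compl hnf) (Finset.single_le_sum (fun _ _ => Nat.zero_le _) hc)
  obtain ⟨k, hk⟩ : ∃ k, keMu compl ϑ = k + 1 :=
    ⟨keMu compl ϑ - 1, by omega⟩
  rcases hcase with ⟨i, _, hT'⟩ | ⟨i, hmiss, hT'⟩
  · have hlt := keMu_insert_disjunct_lt compl hc hnf i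
    calc keM compl T' ≤ 3 ^ keMu compl (insert ([c.get i] : List L) ϑ)
          + ∑ θ ∈ T.erase ϑ, 3 ^ keMu compl θ := by
          rw [hT']; exact sum_insert_le_nat _ _ _
      _ < keM compl T := by
          rw [hT]
          have : 3 ^ keMu compl (insert ([c.get i] : List L) ϑ) < 3 ^ keMu compl ϑ :=
            Nat.pow_lt_pow_right (by norm_num) hlt
          omega
  · have hlt1 := keMu_insert_disjunct_lt compl hc hnf i
    have hlt2 := keMu_insert_compl_lt compl hc hnf i hmiss
    have hb1 : 3 ^ keMu compl (insert ([c.get i] : List L) ϑ) ≤ 3 ^ k :=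
      Nat.pow_le_pow_right (by norm_num) (by omega)
    have hb2 : 3 ^ keMu compl (insert ([compl (c.get i)] : List L) ϑ) ≤ 3 ^ k :=
      Nat.pow_le_pow_right (by norm_num) (by omega)
    calc keM compl T' ≤ 3 ^ keMu compl (insert ([c.get i] : List L) ϑ)
          + (3 ^ keMu compl (insert ([compl (c.get i)] : List L) ϑ)
            + ∑ θ ∈ T.erase ϑ, 3 ^ keMu compl θ) := by
          rw [hT']
          exact le_trans (sum_insert_le_nat _ _ _)
            (by gcongr; exact sum_insert_le_nat _ _ _)
      _ < keM compl T := by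
          rw [hT, hk]
          have h3 : 3 ^ (k + 1) = 3 * 3 ^ k := by ring
          have h3k : 1 ≤ 3 ^ k := Nat.one_le_pow _ _ (by norm_num)
          omega

/-- Termination of the KE-tableau expansion loop: there is no infinite sequence of
applications of the E-rule and the PB-rule to open branches with non-fulfilled
disjunctions. -/
theorem exp_loop_terminates {L : Type*} [DecidableEq L] (compl : L → L) :
    ∀ f : ℕ → Finset (Finset (List L)),
      ¬ (∀ n : ℕ, ExpStep compl (f n) (f (n + 1))) := by
  intro f hf
  have key : ∀ n : ℕ, keM compl (f n) + n ≤ keM compl (f 0) := by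
    intro n
    induction n with
    | zero => simp
    | succ n ih =>
      have := keM_step_lt compl (hf n)
      omega
  have := key (keM compl (f 0) + 1)
  omega
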